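/- Let Ω ⊂ ℝ² be a bounded, open, connected set containing the origin O, and let N ∈ E(Ω) have finite degree of divergence with representation N = Σ_{α∈ℕ², |α| ≤ deg(N)} N^α ∂^α δ_O, N^α ∈ ℝ. If N^α = 0 for all |α| < 2, then there exists E ∈ E(Ω,Sym) such that Curl Curl E = N in D'(Ω). -/

import Mathlib

/-!
Common framework: distributions with point singularities on open subsets of ℝⁿ,
following the paper's setup (test functions, distributions, restriction, scaling
degree and degree of divergence, singular fields, distributional operators).
-/

set_option linter.unusedVariables false

open MeasureTheory Metric Filter Topology Set
open scoped ContDiff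

namespace Paper

/-- Points of `ℝⁿ`. -/
abbrev Pt (n : ℕ) := Fin n → ℝ

/-- A test function for an open set `U ⊆ ℝⁿ`: a compactly supported smooth
function on `ℝⁿ` whose (closed) support lies inside `U`. -/
def IsTestFun {n : ℕ} (U : Set (Pt n)) (f : Pt n → ℝ) : Prop :=
  ContDiff ℝ ∞ f ∧ HasCompactSupport f ∧ tsupport f ⊆ U

theorem isTestFun_zero {n : ℕ} (U : Set (Pt n)) : IsTestFun U (0 : Pt n → ℝ) := by
  have hts : tsupport (0 : Pt n → ℝ) = ∅ := by
    simp [tsupport]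
  exact ⟨contDiff_const, by simp [HasCompactSupport, hts], by simp [hts]⟩

/-- The space `D(U)` of test functions, as a submodule of all functions `ℝⁿ → ℝ`. -/
def testSubmodule (n : ℕ) (U : Set (Pt n)) : Submodule ℝ (Pt n → ℝ) where
  carrier := {f | IsTestFun U f}
  add_mem' := fun hf hg =>
    ⟨hf.1.add hg.1, hf.2.1.add hg.2.1,
      (tsupport_add _ _).trans (union_subset hf.2.2 hg.2.2)⟩
  zero_mem' := isTestFun_zero U
  smul_mem' := fun c f hf =>
    ⟨hf.1.const_smul c, hf.2.1.mono (Function.support_const_smul_subset c f),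
      (closure_mono (Function.support_const_smul_subset c f)).trans hf.2.2⟩

abbrev TestFun (n : ℕ) (U : Set (Pt n)) := ↥(testSubmodule n U)

theorem TestFun.isTF {n : ℕ} {U : Set (Pt n)} (φ : TestFun n U) :
    IsTestFun U (φ : Pt n → ℝ) := φ.2

/-- Convergence of a sequence of test functions in `D(U)`: the supports stay inside a
common compact subset of `U` and all iterated derivatives converge uniformly. -/
def TFConv {n : ℕ} {U : Set (Pt n)} (φ : ℕ → TestFun n U) (ψ : TestFun n U) : Prop :=
  (∃ K : Set (Pt n), IsCompact K ∧ K ⊆ U ∧ ∀ j, tsupport (φ j : Pt n → ℝ) ⊆ K) ∧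
  ∀ m : ℕ, TendstoUniformly (fun j x => iteratedFDeriv ℝ m (φ j : Pt n → ℝ) x)
      (fun x => iteratedFDeriv ℝ m (ψ : Pt n → ℝ) x) atTop

/-- A distribution on `U`, i.e. an element of `D'(U)`: a linear functional on `D(U)`
which is (sequentially) continuous for the test-function topology. -/
structure Dist (n : ℕ) (U : Set (Pt n)) where
  toLin : TestFun n U →ₗ[ℝ] ℝ
  cont : ∀ (φ : ℕ → TestFun n U) (ψ : TestFun n U), TFConv φ ψ →
    Tendsto (fun j => toLin (φ j)) atTop (𝓝 (toLin ψ))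

instance {n : ℕ} {U : Set (Pt n)} : Zero (Dist n U) :=
  ⟨{ toLin := 0
     cont := by intro φ ψ _; simp only [LinearMap.zero_apply]; exact tendsto_const_nhds }⟩

/-- The inclusion `D(W) → D(U)` for `W ⊆ U` (extension of test functions by zero). -/
def tfIncl {n : ℕ} {W U : Set (Pt n)} (h : W ⊆ U) : TestFun n W →ₗ[ℝ] TestFun n U where
  toFun φ := ⟨(φ : Pt n → ℝ), φ.isTF.1, φ.isTF.2.1, φ.isTF.2.2.trans h⟩
  map_add' φ ψ := rfl
  map_smul' c φ := rfl

/-- Restriction `T|_W ∈ D'(W)` of a distribution `T ∈ D'(U)` to a subset `W ⊆ U`. -/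
noncomputable def Dist.restrict {n : ℕ} {U : Set (Pt n)} (T : Dist n U) {W : Set (Pt n)}
    (h : W ⊆ U) : Dist n W where
  toLin := T.toLin.comp (tfIncl h)
  cont := fun φ ψ hconv => by
    refine T.cont (fun j => tfIncl h (φ j)) (tfIncl h ψ) ⟨?_, hconv.2⟩
    obtain ⟨K, hK1, hK2, hK3⟩ := hconv.1
    exact ⟨K, hK1, hK2.trans h, hK3⟩

/-- The partial derivative `∂f/∂xᵢ` of a function on `ℝⁿ`. -/
noncomputable def pderivFun {n : ℕ} (i : Fin n) (f : Pt n → ℝ) : Pt n → ℝ :=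
  fun x => fderiv ℝ f x (Pi.single i 1)

theorem isTestFun_pderiv {n : ℕ} {U : Set (Pt n)} (i : Fin n) {f : Pt n → ℝ}
    (hf : IsTestFun U f) : IsTestFun U (pderivFun i f) := by
  have hsupp : Function.support (pderivFun i f) ⊆ tsupport f := by
    intro x hx
    apply support_fderiv_subset (𝕜 := ℝ)
    intro h
    exact hx (by simp [pderivFun, h])
  refine ⟨(hf.1.fderiv_right (by exact_mod_cast le_top)).clm_apply contDiff_const,
    hf.2.1.mono' hsupp, ?_⟩
  exact (closure_minimal hsupp (isClosed_tsupport f)).trans hf.2.2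

/-- The partial derivative `∂φ/∂xᵢ` of a test function. -/
noncomputable def pdT {n : ℕ} {U : Set (Pt n)} (i : Fin n) (φ : TestFun n U) : TestFun n U :=
  ⟨pderivFun i (φ : Pt n → ℝ), isTestFun_pderiv i φ.isTF⟩

/-- The iterated partial derivative `∂^α f` for a multi-index `α ∈ ℕⁿ`. -/
noncomputable def mpdN {n : ℕ} (α : Fin n → ℕ) (f : Pt n → ℝ) : Pt n → ℝ :=
  (List.finRange n).foldr (fun i g => (pderivFun i)^[α i] g) f

/-- The iterated partial derivative `∂₁^a ∂₂^b f` in two dimensions. -/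
noncomputable def mpd2 (a b : ℕ) (f : Pt 2 → ℝ) : Pt 2 → ℝ :=
  (pderivFun (0 : Fin 2))^[a] ((pderivFun (1 : Fin 2))^[b] f)

/-- The rescaled function `φ_λ(x) = λ⁻ⁿ φ(x/λ)`. -/
noncomputable def scaleFun {n : ℕ} (lam : ℝ) (f : Pt n → ℝ) : Pt n → ℝ :=
  fun x => (lam ^ n)⁻¹ * f (lam⁻¹ • x)

/-- `k` belongs to the scaling set of `T` (w.r.t. the origin) if
`λ^k (T|_{B_r})_λ → 0` in the sense of distributions as `λ → 0⁺`, for some ball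
`B_r` around the origin with `B_r ∖ {O} ⊆ U`.  The rescaled test functions are
encoded by an arbitrary family `Φ` with `(Φ λ) = φ_λ` for `λ ∈ (0,1)`. -/
def sdSet {n : ℕ} {U : Set (Pt n)} (T : Dist n U) : Set ℝ :=
  {k | ∃ r > 0, ball (0 : Pt n) r \ {0} ⊆ U ∧
    ∀ φ : TestFun n U, tsupport (φ : Pt n → ℝ) ⊆ ball (0 : Pt n) r →
    ∀ Φ : ℝ → TestFun n U,
      (∀ lam : ℝ, 0 < lam → lam < 1 → ((Φ lam : Pt n → ℝ) = scaleFun lam (φ : Pt n → ℝ))) →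
      Tendsto (fun lam : ℝ => lam ^ k * T.toLin (Φ lam)) (𝓝[>] 0) (𝓝 0)}

/-- The scaling degree of `T` with respect to the origin, as an extended real. -/
noncomputable def sd {n : ℕ} {U : Set (Pt n)} (T : Dist n U) : EReal :=
  sInf {x : EReal | ∃ k ∈ sdSet T, x = (k : EReal)}

/-- The degree of divergence `deg(T) = sd(T) − n` with respect to the origin. -/
noncomputable def degDiv {n : ℕ} {U : Set (Pt n)} (T : Dist n U) : EReal :=
  sd T - ((n : ℝ) : EReal)

/-- Scaling set for distributions on all of `ℝⁿ`, defined via global rescaling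
`T_λ(φ) = T(φ_λ)` (no localization to a ball). -/
def sdSetG {n : ℕ} (T : Dist n univ) : Set ℝ :=
  {k | ∀ φ : TestFun n univ, ∀ Φ : ℝ → TestFun n univ,
      (∀ lam : ℝ, 0 < lam → lam < 1 → ((Φ lam : Pt n → ℝ) = scaleFun lam (φ : Pt n → ℝ))) →
      Tendsto (fun lam : ℝ => lam ^ k * T.toLin (Φ lam)) (𝓝[>] 0) (𝓝 0)}

noncomputable def sdG {n : ℕ} (T : Dist n univ) : EReal :=
  sInf {x : EReal | ∃ k ∈ sdSetG T, x = (k : EReal)}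

/-- Degree of divergence (global version, for distributions on all of `ℝⁿ`). -/
noncomputable def degDivG {n : ℕ} (T : Dist n univ) : EReal :=
  sdG T - ((n : ℝ) : EReal)

/-- Scaling degree of an `ℝ²`-valued distribution. -/
noncomputable def sdV {U : Set (Pt 2)} (v : Fin 2 → Dist 2 U) : EReal := ⨆ i, sd (v i)

/-- Degree of divergence of an `ℝ²`-valued distribution. -/
noncomputable def degDivV {U : Set (Pt 2)} (v : Fin 2 → Dist 2 U) : EReal :=
  sdV v - ((2 : ℝ) : EReal)

/-- Scaling degree of a matrix-valued distribution. -/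
noncomputable def sdM {U : Set (Pt 2)} (V : Fin 2 → Fin 2 → Dist 2 U) : EReal :=
  ⨆ i, ⨆ j, sd (V i j)

/-- Degree of divergence of a matrix-valued distribution. -/
noncomputable def degDivM {U : Set (Pt 2)} (V : Fin 2 → Fin 2 → Dist 2 U) : EReal :=
  sdM V - ((2 : ℝ) : EReal)

/-- `x ∈ ℝ ∪ {±∞}` is finite. -/
def EReal.IsFinite (x : EReal) : Prop := ∃ k : ℝ, x = (k : EReal)

/-- `T` is represented on the subset `V ⊆ U` by the smooth function `f`:
this expresses that `T|_V` is the smooth map `f`. -/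
def RepOn {n : ℕ} {U : Set (Pt n)} (T : Dist n U) (f : Pt n → ℝ) (V : Set (Pt n)) : Prop :=
  ContDiffOn ℝ ∞ f V ∧
  ∀ φ : TestFun n U, tsupport (φ : Pt n → ℝ) ⊆ V →
    T.toLin φ = ∫ x, f x * (φ : Pt n → ℝ) x

/-- The support of `T` is contained in the set `S`:  `T` vanishes on every test
function whose support does not meet `S`. -/
def SuppIn {n : ℕ} {U : Set (Pt n)} (T : Dist n U) (S : Set (Pt n)) : Prop :=
  ∀ φ : TestFun n U, tsupport (φ : Pt n → ℝ) ∩ S = ∅ → T.toLin φ = 0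

/-! ### Two-dimensional geometry -/

/-- The point of the circle of radius `ε` (centred at the origin) at angle `θ`. -/
noncomputable def circPt (ε θ : ℝ) : Pt 2 := ![ε * Real.cos θ, ε * Real.sin θ]

/-- Unit tangent to the (counter-clockwise) circle at angle `θ`. -/
noncomputable def tanVec (θ : ℝ) : Pt 2 := ![-Real.sin θ, Real.cos θ]

/-- Outward unit normal to the circle at angle `θ`. -/
noncomputable def norVec (θ : ℝ) : Pt 2 := ![Real.cos θ, Real.sin θ]

/-- The closed Euclidean disc of radius `ε` centred at the origin. -/
def eball (ε : ℝ) : Set (Pt 2) := {x | x 0 ^ 2 + x 1 ^ 2 ≤ ε ^ 2}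

/-- The circulation `∮_{∂B_ε} ⟨A₀, t⟩ dl` of a vector field around the circle `∂B_ε`. -/
noncomputable def circTan (A0 : Fin 2 → Pt 2 → ℝ) (ε : ℝ) : ℝ :=
  ∫ θ in (0:ℝ)..(2 * Real.pi),
    (A0 0 (circPt ε θ) * (-Real.sin θ) + A0 1 (circPt ε θ) * Real.cos θ) * ε

/-- The flux `∮_{∂B_ε} ⟨A₀, n⟩ dl` of a vector field through the circle `∂B_ε`. -/
noncomputable def circNor (A0 : Fin 2 → Pt 2 → ℝ) (ε : ℝ) : ℝ :=
  ∫ θ in (0:ℝ)..(2 * Real.pi),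
    (A0 0 (circPt ε θ) * Real.cos θ + A0 1 (circPt ε θ) * Real.sin θ) * ε

/-- `curl f = ∂₁f₂ − ∂₂f₁` of a smooth planar vector field. -/
noncomputable def curlFun (A0 : Fin 2 → Pt 2 → ℝ) : Pt 2 → ℝ :=
  fun x => pderivFun 0 (A0 1) x - pderivFun 1 (A0 0) x

/-- `div f = ∂₁f₁ + ∂₂f₂` of a smooth planar vector field. -/
noncomputable def divFun (A0 : Fin 2 → Pt 2 → ℝ) : Pt 2 → ℝ :=
  fun x => pderivFun 0 (A0 0) x + pderivFun 1 (A0 1) x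

/-- `curl curl V = ∂₁∂₁V₂₂ − ∂₁∂₂(V₁₂+V₂₁) + ∂₂∂₂V₁₁` of a smooth matrix field. -/
noncomputable def ccFun (E0 : Fin 2 → Fin 2 → Pt 2 → ℝ) : Pt 2 → ℝ := fun x =>
  pderivFun 0 (pderivFun 0 (E0 1 1)) x
    - pderivFun 0 (pderivFun 1 (fun y => E0 0 1 y + E0 1 0 y)) x
    + pderivFun 1 (pderivFun 1 (E0 0 0)) x

/-- The `i`-th component of the Cesàro loop integral
`∮_{∂B_ε} { E₀(y) + (y−x) × curl E₀(y) } dy` around the circle `∂B_ε`. -/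
noncomputable def cesaro (E0 : Fin 2 → Fin 2 → Pt 2 → ℝ) (x : Pt 2) (ε : ℝ) (i : Fin 2) : ℝ :=
  ∫ θ in (0:ℝ)..(2 * Real.pi),
    (∑ j : Fin 2, (E0 i j (circPt ε θ) +
        ∑ k : Fin 2, (circPt ε θ k - x k) *
          (pderivFun j (E0 i k) (circPt ε θ) - pderivFun k (E0 i j) (circPt ε θ)))
      * tanVec θ j) * ε

/-! ### Distributional operators, expressed through their action on test functions -/

/-- `∇u = v` for distributions: `vᵢ(φ) = −u(∂ᵢφ)`. -/
def IsGradOf {n : ℕ} {U : Set (Pt n)} (u : Dist n U) (v : Fin n → Dist n U) : Prop :=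
  ∀ (i : Fin n) (φ : TestFun n U), (v i).toLin φ = - u.toLin (pdT i φ)

/-- `Curl v = T` for a planar vector distribution `v`:
`T(ψ) = −v(e₃ × ∇ψ) = v₁(∂₂ψ) − v₂(∂₁ψ)`. -/
def CurlEq {U : Set (Pt 2)} (v : Fin 2 → Dist 2 U) (T : Dist 2 U) : Prop :=
  ∀ ψ : TestFun 2 U, T.toLin ψ = (v 0).toLin (pdT 1 ψ) - (v 1).toLin (pdT 0 ψ)

/-- `Curl v = 0` for a planar vector distribution. -/
def CurlZero {U : Set (Pt 2)} (v : Fin 2 → Dist 2 U) : Prop :=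
  ∀ ψ : TestFun 2 U, (v 0).toLin (pdT 1 ψ) - (v 1).toLin (pdT 0 ψ) = 0

/-- `Div v = T` for a planar vector distribution `v`: `T(ψ) = −v(∇ψ)`. -/
def DivEq {U : Set (Pt 2)} (v : Fin 2 → Dist 2 U) (T : Dist 2 U) : Prop :=
  ∀ ψ : TestFun 2 U,
    T.toLin ψ = -((v 0).toLin (pdT 0 ψ) + (v 1).toLin (pdT 1 ψ))

/-- The stress equilibrium equation `Div σ + B = 0` in `D'(U, ℝ²)`, where
`(Div σ)ᵢ(ψ) = −Σⱼ σᵢⱼ(∂ⱼψ)`. -/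
def DivPlusEqZero {U : Set (Pt 2)} (σ : Fin 2 → Fin 2 → Dist 2 U)
    (B : Fin 2 → Dist 2 U) : Prop :=
  ∀ (i : Fin 2) (ψ : TestFun 2 U),
    -((σ i 0).toLin (pdT 0 ψ) + (σ i 1).toLin (pdT 1 ψ)) + (B i).toLin ψ = 0

/-- The evaluation `(Curl Curl V)(ψ) = V(𝔸∇²ψ)` for a matrix distribution `V`. -/
noncomputable def ccEval {U : Set (Pt 2)} (V : Fin 2 → Fin 2 → Dist 2 U)
    (ψ : TestFun 2 U) : ℝ :=
  (V 0 0).toLin (pdT 1 (pdT 1 ψ)) - (V 0 1).toLin (pdT 0 (pdT 1 ψ))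
    - (V 1 0).toLin (pdT 1 (pdT 0 ψ)) + (V 1 1).toLin (pdT 0 (pdT 0 ψ))

/-- `Curl Curl V = T` in `D'(U)` for a matrix distribution `V`. -/
def CurlCurlEq {U : Set (Pt 2)} (V : Fin 2 → Fin 2 → Dist 2 U) (T : Dist 2 U) : Prop :=
  ∀ ψ : TestFun 2 U, ccEval V ψ = T.toLin ψ

/-- `Curl Curl V = 0` in `D'(U)` for a matrix distribution `V`. -/
def CurlCurlZero {U : Set (Pt 2)} (V : Fin 2 → Fin 2 → Dist 2 U) : Prop :=
  ∀ ψ : TestFun 2 U, ccEval V ψ = 0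

/-- `E = (1/2)(∇u + (∇u)ᵀ)` for distributions:
`Eᵢⱼ(φ) = −(1/2)(uᵢ(∂ⱼφ) + uⱼ(∂ᵢφ))`. -/
def IsSymGrad {U : Set (Pt 2)} (u : Fin 2 → Dist 2 U)
    (E : Fin 2 → Fin 2 → Dist 2 U) : Prop :=
  ∀ (i j : Fin 2) (φ : TestFun 2 U),
    (E i j).toLin φ = -(1/2 : ℝ) * ((u i).toLin (pdT j φ) + (u j).toLin (pdT i φ))

/-- The polynomial `(−1)^{a+b} x₁^a x₂^b / (a! b!)`, the local model of the test
function `w^α` for the multi-index `α = (a,b)`. -/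
noncomputable def polyA (a b : ℕ) : Pt 2 → ℝ :=
  fun x => (-1 : ℝ) ^ (a + b) * x 0 ^ a * x 1 ^ b / ((Nat.factorial a : ℝ) * (Nat.factorial b : ℝ))


set_option maxHeartbeats 1000000
set_option synthInstance.maxHeartbeats 400000
open scoped Interval

theorem one_le_inf : (1 : WithTop ℕ∞) ≤ ∞ := by exact_mod_cast le_top
theorem nat_le_inf (l : ℕ) : (l : WithTop ℕ∞) ≤ ∞ := by exact_mod_cast le_top
theorem inf_add_one : (∞ : WithTop ℕ∞) + 1 ≤ ∞ := by norm_num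

section Fop
variable {F : Type} [NormedAddCommGroup F] [NormedSpace ℝ F]

/-- `Fop c g x = ∫ t in 0..1, c t • g (t • x)`. -/
noncomputable def Fop (c : ℝ → ℝ) (g : Pt 2 → F) (x : Pt 2) : F :=
  ∫ t in (0:ℝ)..1, c t • g (t • x)

theorem cont_integrand {c : ℝ → ℝ} (hc : Continuous c) {g : Pt 2 → F}
    (hg : Continuous g) (x : Pt 2) : Continuous fun t : ℝ => c t • g (t • x) :=
  (hc.smul (hg.comp (continuous_id.smul continuous_const)))

theorem Fop_add {c : ℝ → ℝ} (hc : Continuous c) {g h : Pt 2 → F}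
    (hg : Continuous g) (hh : Continuous h) (x : Pt 2) :
    Fop c (g + h) x = Fop c g x + Fop c h x := by
  unfold Fop
  rw [← intervalIntegral.integral_add ((cont_integrand hc hg x).intervalIntegrable _ _)
      ((cont_integrand hc hh x).intervalIntegrable _ _)]
  simp [smul_add]

theorem Fop_sub {c : ℝ → ℝ} (hc : Continuous c) {g h : Pt 2 → F}
    (hg : Continuous g) (hh : Continuous h) (x : Pt 2) :
    Fop c (g - h) x = Fop c g x - Fop c h x := by
  unfold Fop
  rw [← intervalIntegral.integral_sub ((cont_integrand hc hg x).intervalIntegrable _ _)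
      ((cont_integrand hc hh x).intervalIntegrable _ _)]
  simp [smul_sub]

theorem Fop_smul {c : ℝ → ℝ} (a : ℝ) {g : Pt 2 → F} (x : Pt 2) :
    Fop c (a • g) x = a • Fop c g x := by
  unfold Fop
  rw [← intervalIntegral.integral_smul]
  congr 1; funext t; simp [smul_comm (c t) a]

theorem hasFDerivAt_Fop {c : ℝ → ℝ} (hc : Continuous c) {g : Pt 2 → F}
    (hg : ContDiff ℝ ∞ g) (hgs : HasCompactSupport g) (x₀ : Pt 2) :
    HasFDerivAt (Fop c g) (Fop (fun t => c t * t) (fderiv ℝ g) x₀) x₀ := by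
  obtain ⟨M, hM⟩ : ∃ M, ∀ y, ‖fderiv ℝ g y‖ ≤ M :=
    (hg.continuous_fderiv (by simp)).bounded_above_of_compact_support (hgs.fderiv (𝕜 := ℝ))
  obtain ⟨Mc, hMc⟩ : ∃ Mc, ∀ t ∈ Ι (0:ℝ) 1, |c t| ≤ Mc := by
    obtain ⟨Mc, hMc⟩ := (isCompact_Icc (a := (0:ℝ)) (b := 1)).exists_bound_of_continuousOn
      hc.continuousOn
    refine ⟨Mc, fun t ht => ?_⟩
    have := hMc t (Ioc_subset_Icc_self (by rwa [uIoc_of_le zero_le_one] at ht))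
    simpa using this
  have key := intervalIntegral.hasFDerivAt_integral_of_dominated_of_fderiv_le
    (𝕜 := ℝ) (μ := volume) (a := (0:ℝ)) (b := 1)
    (F := fun (x : Pt 2) (t : ℝ) => c t • g (t • x))
    (F' := fun (x : Pt 2) (t : ℝ) => (c t * t) • fderiv ℝ g (t • x))
    (x₀ := x₀) (s := ball x₀ 1) (bound := fun _ => Mc * M) (ball_mem_nhds x₀ one_pos)
    ?_ ?_ ?_ ?_ ?_ ?_
  · exact key
  · filter_upwards with x
    exact (cont_integrand hc hg.continuous x).aestronglyMeasurable
  · exact (cont_integrand hc hg.continuous x₀).intervalIntegrable _ _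
  · apply Continuous.aestronglyMeasurable
    exact ((hc.mul continuous_id).smul ((hg.continuous_fderiv (by simp)).comp
      (continuous_id.smul continuous_const)))
  · filter_upwards with t
    intro ht x hx
    have h1 : |c t| ≤ Mc := hMc t ht
    have ht' : t ∈ Set.Ioc (0:ℝ) 1 := by rwa [uIoc_of_le zero_le_one] at ht
    have ht1 : |t| ≤ 1 := by rw [abs_of_pos ht'.1]; exact ht'.2
    have hns : ‖(c t * t) • fderiv ℝ g (t • x)‖ = |c t| * (|t| * ‖fderiv ℝ g (t • x)‖) := by
      have := norm_smul (α := ℝ) (β := Pt 2 →L[ℝ] F) (c t * t) (fderiv ℝ g (t • x))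
      rw [this, Real.norm_eq_abs, abs_mul, mul_assoc]
    calc ‖(c t * t) • fderiv ℝ g (t • x)‖ = |c t| * (|t| * ‖fderiv ℝ g (t • x)‖) := hns
      _ ≤ Mc * (1 * M) := by
          refine mul_le_mul h1 ?_ (by positivity) ((abs_nonneg _).trans h1)
          exact mul_le_mul ht1 (hM _) (norm_nonneg _) zero_le_one
      _ = Mc * M := by ring
  · exact intervalIntegrable_const
  · filter_upwards with t
    intro ht x hx
    have hd : HasFDerivAt g (fderiv ℝ g (t • x)) (t • x) :=
      (hg.differentiable (by simp)).differentiableAt.hasFDerivAt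
    have hlin : HasFDerivAt (fun y : Pt 2 => t • y) ((t : ℝ) • ContinuousLinearMap.id ℝ (Pt 2)) x :=
      ((ContinuousLinearMap.id ℝ (Pt 2)).hasFDerivAt).const_smul t
    have h2 : HasFDerivAt (fun y : Pt 2 => g (t • y)) (t • fderiv ℝ g (t • x)) x := by
      exact (hd.comp x hlin).congr_fderiv (by ext v; simp)
    have h3 := h2.const_smul (c t)
    convert h3 using 1
    · funext y; rfl
    rw [mul_smul, smul_comm]
end Fop

section Fop2
variable {F : Type} [NormedAddCommGroup F] [NormedSpace ℝ F]

theorem contDiff_Fop (n : ℕ) : ∀ {F : Type} [inst : NormedAddCommGroup F]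
    [inst2 : NormedSpace ℝ F] (c : ℝ → ℝ), Continuous c → ∀ (g : Pt 2 → F),
    ContDiff ℝ ∞ g → HasCompactSupport g → ContDiff ℝ (n : WithTop ℕ∞) (Fop c g) := by
  induction n with
  | zero =>
    intro F _ _ c hc g hg hgs
    rw [show ((0:ℕ) : WithTop ℕ∞) = 0 from rfl, contDiff_zero]
    exact continuous_iff_continuousAt.2 fun x =>
      (hasFDerivAt_Fop hc hg hgs x).differentiableAt.continuousAt
  | succ n ih =>
    intro F _ _ c hc g hg hgs
    rw [show ((n+1:ℕ) : WithTop ℕ∞) = (n : WithTop ℕ∞) + 1 by norm_cast,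
      contDiff_succ_iff_fderiv]
    refine ⟨fun x => (hasFDerivAt_Fop hc hg hgs x).differentiableAt, ?_, ?_⟩
    · intro h; simp at h
    · have heq : fderiv ℝ (Fop c g) = Fop (fun t => c t * t) (fderiv ℝ g) := by
        funext x; exact (hasFDerivAt_Fop hc hg hgs x).fderiv
      rw [heq]
      exact ih _ (hc.mul continuous_id) _ (hg.fderiv_right inf_add_one) (hgs.fderiv (𝕜 := ℝ))

theorem contDiff_inf_Fop {c : ℝ → ℝ} (hc : Continuous c) {g : Pt 2 → F}
    (hg : ContDiff ℝ ∞ g) (hgs : HasCompactSupport g) : ContDiff ℝ ∞ (Fop c g) :=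
  contDiff_infty.2 fun n => contDiff_Fop n c hc g hg hgs

theorem norm_iteratedFDeriv_Fop_le (m : ℕ) : ∀ {F : Type} [inst : NormedAddCommGroup F]
    [inst2 : NormedSpace ℝ F] (c : ℝ → ℝ), Continuous c → (∀ t ∈ Ι (0:ℝ) 1, |c t| ≤ 1) →
    ∀ (g : Pt 2 → F), ContDiff ℝ ∞ g → HasCompactSupport g →
    ∀ (C : ℝ), (∀ y, ‖iteratedFDeriv ℝ m g y‖ ≤ C) →
    ∀ x, ‖iteratedFDeriv ℝ m (Fop c g) x‖ ≤ C := by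
  induction m with
  | zero =>
    intro F _ _ c hc hc1 g hg hgs C hC x
    rw [norm_iteratedFDeriv_zero]
    have : ∀ t ∈ Ι (0:ℝ) 1, ‖c t • g (t • x)‖ ≤ C := by
      intro t ht
      rw [norm_smul, Real.norm_eq_abs]
      calc |c t| * ‖g (t • x)‖ ≤ 1 * C :=
            mul_le_mul (hc1 t ht) (by simpa [norm_iteratedFDeriv_zero] using hC (t • x))
              (norm_nonneg _) zero_le_one
        _ = C := one_mul C
    calc ‖Fop c g x‖ ≤ C * |1 - 0| := intervalIntegral.norm_integral_le_of_norm_le_const this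
      _ = C := by norm_num
  | succ m ih =>
    intro F _ _ c hc hc1 g hg hgs C hC x
    rw [← norm_iteratedFDeriv_fderiv]
    have heq : fderiv ℝ (Fop c g) = Fop (fun t => c t * t) (fderiv ℝ g) := by
      funext y; exact (hasFDerivAt_Fop hc hg hgs y).fderiv
    rw [heq]
    refine ih _ (hc.mul continuous_id) ?_ _ (hg.fderiv_right inf_add_one) (hgs.fderiv (𝕜 := ℝ)) C ?_ x
    · intro t ht
      have ht' : t ∈ Set.Ioc (0:ℝ) 1 := by rwa [uIoc_of_le zero_le_one] at ht
      show |c t * t| ≤ 1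
      rw [abs_mul]
      calc |c t| * |t| ≤ 1 * 1 := mul_le_mul (hc1 t ht)
            (by rw [abs_of_pos ht'.1]; exact ht'.2) (abs_nonneg _) zero_le_one
        _ = 1 := one_mul 1
    · intro y
      rw [norm_iteratedFDeriv_fderiv]
      exact hC y

end Fop2

noncomputable def cw : ℝ → ℝ := fun t => 1 - t

theorem cw_cont : Continuous cw := by unfold cw; fun_prop

theorem cw_le : ∀ t ∈ Ι (0:ℝ) 1, |cw t| ≤ 1 := by
  intro t ht
  rw [uIoc_of_le zero_le_one] at ht
  simp only [cw]
  rw [abs_of_nonneg (by linarith [ht.2] : (0:ℝ) ≤ 1 - t)]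
  linarith [ht.1]

theorem contDiff_coord (k : Fin 2) : ContDiff ℝ ∞ (fun x : Pt 2 => x k) :=
  (ContinuousLinearMap.proj (R := ℝ) (φ := fun _ : Fin 2 => ℝ) k).contDiff

noncomputable def qmul (η : ContDiffBump (0 : Pt 2)) (i j : Fin 2) : Pt 2 → ℝ :=
  fun x => η x * (x (1 - i) * x (1 - j))

theorem qmul_smooth (η : ContDiffBump (0 : Pt 2)) (i j : Fin 2) :
    ContDiff ℝ ∞ (qmul η i j) :=
  η.contDiff.mul ((contDiff_coord (1-i)).mul (contDiff_coord (1-j)))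

theorem qmul_suppsub (η : ContDiffBump (0 : Pt 2)) (i j : Fin 2) :
    Function.support (qmul η i j) ⊆ Function.support (η : Pt 2 → ℝ) := by
  intro x hx
  simp only [qmul, Function.mem_support] at hx ⊢
  exact fun h => hx (by rw [h, zero_mul])

theorem qmul_hcs (η : ContDiffBump (0 : Pt 2)) (i j : Fin 2) :
    HasCompactSupport (qmul η i j) :=
  η.hasCompactSupport.mono' ((qmul_suppsub η i j).trans subset_closure)

section Op
variable {Ω : Set (Pt 2)} (η : ContDiffBump (0 : Pt 2))
  (hη : closedBall (0 : Pt 2) η.rOut ⊆ Ω)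

include hη in
theorem LT_isTest (i j : Fin 2) (φ : TestFun 2 Ω) :
    IsTestFun Ω (fun x => qmul η i j x * Fop cw (φ : Pt 2 → ℝ) x) := by
  have hsm : ContDiff ℝ ∞ (fun x => qmul η i j x * Fop cw (φ : Pt 2 → ℝ) x) :=
    (qmul_smooth η i j).mul (contDiff_inf_Fop cw_cont φ.isTF.1 φ.isTF.2.1)
  have hsup : Function.support (fun x => qmul η i j x * Fop cw (φ : Pt 2 → ℝ) x) ⊆
      Function.support (η : Pt 2 → ℝ) := by
    intro x hx
    apply qmul_suppsub η i j
    simp only [Function.mem_support] at hx ⊢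
    exact fun h => hx (by rw [h, zero_mul])
  have hsup2 : Function.support (fun x => qmul η i j x * Fop cw (φ : Pt 2 → ℝ) x) ⊆
      closedBall (0 : Pt 2) η.rOut := hsup.trans (η.tsupport_eq ▸ subset_closure)
  have hts : tsupport (fun x => qmul η i j x * Fop cw (φ : Pt 2 → ℝ) x) ⊆
      closedBall (0 : Pt 2) η.rOut :=
    closure_minimal hsup2 isClosed_closedBall
  refine ⟨hsm, ?_, hts.trans hη⟩
  exact HasCompactSupport.of_support_subset_isCompact (isCompact_closedBall _ _) hsup2

noncomputable def LTest (i j : Fin 2) (φ : TestFun 2 Ω) : TestFun 2 Ω :=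
  ⟨fun x => qmul η i j x * Fop cw (φ : Pt 2 → ℝ) x, LT_isTest η hη i j φ⟩

theorem LTest_add (i j : Fin 2) (φ ψ : TestFun 2 Ω) :
    LTest η hη i j (φ + ψ) = LTest η hη i j φ + LTest η hη i j ψ := by
  apply Subtype.ext
  funext x
  show qmul η i j x * Fop cw ((φ : Pt 2 → ℝ) + (ψ : Pt 2 → ℝ)) x = _
  rw [Fop_add cw_cont φ.isTF.1.continuous ψ.isTF.1.continuous]
  show _ = qmul η i j x * Fop cw (φ : Pt 2 → ℝ) x + qmul η i j x * Fop cw (ψ : Pt 2 → ℝ) x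
  ring

theorem LTest_smul (i j : Fin 2) (a : ℝ) (φ : TestFun 2 Ω) :
    LTest η hη i j (a • φ) = a • LTest η hη i j φ := by
  apply Subtype.ext
  funext x
  show qmul η i j x * Fop cw (a • (φ : Pt 2 → ℝ)) x = a • (qmul η i j x * Fop cw (φ : Pt 2 → ℝ) x)
  rw [Fop_smul]
  simp [smul_eq_mul]; ring

theorem iFD_sub {l : ℕ} {f g : Pt 2 → ℝ} (hf : ContDiff ℝ ∞ f) (hg : ContDiff ℝ ∞ g)
    (x : Pt 2) :
    iteratedFDeriv ℝ l (f - g) x = iteratedFDeriv ℝ l f x - iteratedFDeriv ℝ l g x := by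
  have hgneg : ContDiff ℝ (l : WithTop ℕ∞) (-g) := (hg.of_le (nat_le_inf l)).neg
  rw [sub_eq_add_neg, iteratedFDeriv_add_apply (hf.of_le (nat_le_inf l)).contDiffAt hgneg.contDiffAt,
    iteratedFDeriv_neg_apply, ← sub_eq_add_neg]

include hη in
theorem LT_tsupport (i j : Fin 2) (φ : TestFun 2 Ω) :
    tsupport (LTest η hη i j φ : Pt 2 → ℝ) ⊆ closedBall (0 : Pt 2) η.rOut := by
  have hsup : Function.support (LTest η hη i j φ : Pt 2 → ℝ) ⊆
      closedBall (0 : Pt 2) η.rOut := by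
    intro x hx
    have : qmul η i j x ≠ 0 := by
      simp only [Function.mem_support] at hx
      exact fun hq => hx (by show qmul η i j x * _ = 0; rw [hq, zero_mul])
    have : x ∈ Function.support (qmul η i j) := this
    have h2 : Function.support (η : Pt 2 → ℝ) ⊆ closedBall (0 : Pt 2) η.rOut := by
      rw [← η.tsupport_eq]; exact subset_closure
    exact h2 (qmul_suppsub η i j this)
  exact closure_minimal hsup isClosed_closedBall

include hη in
theorem LTest_conv (i j : Fin 2) (φs : ℕ → TestFun 2 Ω) (ψ : TestFun 2 Ω)
    (h : TFConv φs ψ) :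
    TFConv (fun k => LTest η hη i j (φs k)) (LTest η hη i j ψ) := by
  constructor
  · exact ⟨closedBall (0 : Pt 2) η.rOut, isCompact_closedBall _ _, hη,
      fun k => LT_tsupport η hη i j (φs k)⟩
  · intro m
    rw [Metric.tendstoUniformly_iff]
    intro ε hε
    -- bounds for the fixed multiplier
    have hQ : ∀ k : ℕ, ∃ Qk : ℝ, 0 ≤ Qk ∧ ∀ x, ‖iteratedFDeriv ℝ k (qmul η i j) x‖ ≤ Qk := by
      intro k
      obtain ⟨C, hC⟩ := ((qmul_smooth η i j).continuous_iteratedFDeriv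
        (nat_le_inf k)).bounded_above_of_compact_support ((qmul_hcs η i j).iteratedFDeriv k)
      exact ⟨max C 0, le_max_right _ _, fun x => (hC x).trans (le_max_left _ _)⟩
    choose Q hQ0 hQb using hQ
    set D : ℝ := (∑ k ∈ Finset.range (m+1), (m.choose k : ℝ) * Q k) + 1 with hD
    have hDpos : 0 < D := by
      have : (0:ℝ) ≤ ∑ k ∈ Finset.range (m+1), (m.choose k : ℝ) * Q k :=
        Finset.sum_nonneg fun k _ => mul_nonneg (by positivity) (hQ0 k)
      linarith
    have hsmall : ∀ l, ∀ᶠ kk in atTop,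
        ∀ x, ‖iteratedFDeriv ℝ l ((ψ : Pt 2 → ℝ) - (φs kk : Pt 2 → ℝ)) x‖ ≤ ε/(2*D) := by
      intro l
      have := (Metric.tendstoUniformly_iff.mp (h.2 l)) (ε/(2*D)) (by positivity)
      filter_upwards [this] with kk hkk x
      have := hkk x
      rw [dist_eq_norm] at this
      rw [iFD_sub ψ.isTF.1 (φs kk).isTF.1]
      exact this.le
    have hall : ∀ᶠ kk in atTop, ∀ l ∈ Finset.range (m+1),
        ∀ x, ‖iteratedFDeriv ℝ l ((ψ : Pt 2 → ℝ) - (φs kk : Pt 2 → ℝ)) x‖ ≤ ε/(2*D) :=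
      (Finset.eventually_all (Finset.range (m+1))).2 fun l _ => hsmall l
    filter_upwards [hall] with kk hkk x
    rw [dist_eq_norm]
    set gd : Pt 2 → ℝ := (ψ : Pt 2 → ℝ) - (φs kk : Pt 2 → ℝ) with hgd
    have hgdsm : ContDiff ℝ ∞ gd := ψ.isTF.1.sub (φs kk).isTF.1
    have hgdcs : HasCompactSupport gd := by
      rw [hgd, sub_eq_add_neg]; have hneg : HasCompactSupport (-(φs kk : Pt 2 → ℝ)) :=
        (φs kk).isTF.2.1.comp_left (g := Neg.neg) neg_zero
      exact HasCompactSupport.add ψ.isTF.2.1 hneg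
    have heqf : (LTest η hη i j ψ : Pt 2 → ℝ) - (LTest η hη i j (φs kk) : Pt 2 → ℝ)
        = fun x => qmul η i j x * Fop cw gd x := by
      funext y
      show qmul η i j y * Fop cw (ψ : Pt 2 → ℝ) y - qmul η i j y * Fop cw (φs kk : Pt 2 → ℝ) y
        = qmul η i j y * Fop cw gd y
      rw [hgd, Fop_sub cw_cont ψ.isTF.1.continuous (φs kk).isTF.1.continuous]
      ring
    have hLsm : ContDiff ℝ ∞ (LTest η hη i j ψ : Pt 2 → ℝ) := (LTest η hη i j ψ).isTF.1
    have hLsm2 : ContDiff ℝ ∞ (LTest η hη i j (φs kk) : Pt 2 → ℝ) :=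
      (LTest η hη i j (φs kk)).isTF.1
    rw [← iFD_sub hLsm hLsm2, heqf]
    have hmul := norm_iteratedFDeriv_mul_le (𝕜 := ℝ) (N := (∞ : WithTop ℕ∞))
      (qmul_smooth η i j) (contDiff_inf_Fop cw_cont hgdsm hgdcs) x (nat_le_inf m)
    have hsum : ∑ l ∈ Finset.range (m+1), (m.choose l : ℝ)
        * ‖iteratedFDeriv ℝ l (qmul η i j) x‖
        * ‖iteratedFDeriv ℝ (m - l) (Fop cw gd) x‖ ≤ D * (ε/(2*D)) := by
      calc ∑ l ∈ Finset.range (m+1), (m.choose l : ℝ) * ‖iteratedFDeriv ℝ l (qmul η i j) x‖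
            * ‖iteratedFDeriv ℝ (m - l) (Fop cw gd) x‖
          ≤ ∑ l ∈ Finset.range (m+1), (m.choose l : ℝ) * Q l * (ε/(2*D)) := by
            apply Finset.sum_le_sum
            intro l hl
            have hFb : ‖iteratedFDeriv ℝ (m - l) (Fop cw gd) x‖ ≤ ε/(2*D) := by
              apply norm_iteratedFDeriv_Fop_le (m - l) cw cw_cont cw_le gd hgdsm hgdcs
                (ε/(2*D)) (fun y => hkk (m - l) (Finset.mem_range.2 (Nat.lt_succ_of_le
                  (Nat.sub_le m l))) y)
            refine mul_le_mul ?_ hFb (norm_nonneg _) (mul_nonneg (by positivity) (hQ0 l))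
            exact mul_le_mul_of_nonneg_left (hQb l x) (by positivity)
        _ = (∑ l ∈ Finset.range (m+1), (m.choose l : ℝ) * Q l) * (ε/(2*D)) := by
            rw [Finset.sum_mul]
        _ ≤ D * (ε/(2*D)) := by
            apply mul_le_mul_of_nonneg_right _ (by positivity)
            rw [hD]; linarith
    have hfin : D * (ε/(2*D)) < ε := by
      rw [show D * (ε/(2*D)) = ε/2 by field_simp]
      linarith
    exact lt_of_le_of_lt (hmul.trans hsum) hfin

noncomputable def sgn (i j : Fin 2) : ℝ := if i = j then 1 else -1

noncomputable def Edist (N : Dist 2 Ω) (i j : Fin 2) : Dist 2 Ω where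
  toLin :=
    { toFun := fun φ => sgn i j * N.toLin (LTest η hη i j φ)
      map_add' := fun φ ψ => by
        show sgn i j * N.toLin (LTest η hη i j (φ + ψ)) = _
        rw [LTest_add, map_add]; ring
      map_smul' := fun a φ => by
        show sgn i j * N.toLin (LTest η hη i j (a • φ)) = _
        rw [LTest_smul, LinearMap.map_smul]
        simp only [smul_eq_mul, RingHom.id_apply]; ring }
  cont := fun φs ψ hconv => by
    exact ((N.cont _ _ (LTest_conv η hη i j φs ψ hconv)).const_mul (sgn i j))

include hη in
theorem Edist_suppIn (N : Dist 2 Ω) (hsupp : SuppIn N {0}) (i j : Fin 2) :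
    SuppIn (Edist η hη N i j) {0} := by
  intro φ hφ
  show sgn i j * N.toLin (LTest η hη i j φ) = 0
  have h0 : (0 : Pt 2) ∉ tsupport (φ : Pt 2 → ℝ) := by
    intro h
    have : (0:Pt 2) ∈ tsupport (φ : Pt 2 → ℝ) ∩ {0} := ⟨h, rfl⟩
    rw [hφ] at this
    exact this
  obtain ⟨δ', hδ'pos, hball⟩ :=
    Metric.isOpen_iff.mp (isClosed_tsupport (φ : Pt 2 → ℝ)).isOpen_compl 0 h0
  have hφ0 : ∀ y ∈ ball (0:Pt 2) δ', (φ : Pt 2 → ℝ) y = 0 := fun y hy =>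
    image_eq_zero_of_notMem_tsupport (hball hy)
  have hL0 : ∀ x ∈ ball (0:Pt 2) δ', (LTest η hη i j φ : Pt 2 → ℝ) x = 0 := by
    intro x hx
    show qmul η i j x * Fop cw (φ : Pt 2 → ℝ) x = 0
    have hF : Fop cw (φ : Pt 2 → ℝ) x = 0 := by
      unfold Fop
      have heq : EqOn (fun t : ℝ => cw t • (φ : Pt 2 → ℝ) (t • x)) (fun _ => (0:ℝ))
          (uIcc (0:ℝ) 1) := by
        intro t ht
        rw [uIcc_of_le zero_le_one] at ht
        have hxt : t • x ∈ ball (0:Pt 2) δ' := by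
          rw [mem_ball_zero_iff] at hx ⊢
          calc ‖t • x‖ = |t| * ‖x‖ := by rw [norm_smul, Real.norm_eq_abs]
            _ ≤ 1 * ‖x‖ := by
                apply mul_le_mul_of_nonneg_right _ (norm_nonneg x)
                rw [abs_le]; exact ⟨by linarith [ht.1], ht.2⟩
            _ < δ' := by rw [one_mul]; exact hx
        show cw t • (φ : Pt 2 → ℝ) (t • x) = 0
        rw [hφ0 _ hxt, smul_zero]
      rw [intervalIntegral.integral_congr heq, intervalIntegral.integral_const, smul_zero]
    rw [hF, mul_zero]
  have hts0 : (0 : Pt 2) ∉ tsupport (LTest η hη i j φ : Pt 2 → ℝ) := by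
    have hsub : Function.support (LTest η hη i j φ : Pt 2 → ℝ) ⊆ (ball (0:Pt 2) δ')ᶜ := by
      intro x hx hmem
      exact hx (hL0 x hmem)
    have h2 : tsupport (LTest η hη i j φ : Pt 2 → ℝ) ⊆ (ball (0:Pt 2) δ')ᶜ :=
      closure_minimal hsub isOpen_ball.isClosed_compl
    exact fun h => (h2 h) (mem_ball_self hδ'pos)
  have hemp : tsupport (LTest η hη i j φ : Pt 2 → ℝ) ∩ {0} = ∅ := by
    rw [eq_empty_iff_forall_notMem]
    rintro y ⟨hy1, hy2⟩
    rw [mem_singleton_iff] at hy2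
    subst hy2
    exact hts0 hy1
  rw [hsupp _ hemp, mul_zero]

end Op

theorem Dist.ext' {n : ℕ} {U : Set (Pt n)} {T S : Dist n U} (h : T.toLin = S.toLin) :
    T = S := by
  cases T with
  | mk t tc => cases S with
    | mk s sc =>
      cases h
      rfl

theorem pderiv_smooth {f : Pt 2 → ℝ} (hf : ContDiff ℝ ∞ f) (j : Fin 2) :
    ContDiff ℝ ∞ (pderivFun j f) := (hf.fderiv_right inf_add_one).clm_apply contDiff_const

theorem clm_decomp (A : Pt 2 →L[ℝ] ℝ) (x : Pt 2) :
    A x = x 0 * A (Pi.single 0 1) + x 1 * A (Pi.single 1 1) := by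
  have hx : x = x 0 • (Pi.single (0:Fin 2) (1:ℝ) : Pt 2)
      + x 1 • (Pi.single (1:Fin 2) (1:ℝ) : Pt 2) := by
    funext k; fin_cases k <;> simp
  conv_lhs => rw [hx]
  rw [map_add, A.map_smul, A.map_smul, smul_eq_mul, smul_eq_mul]

theorem hasDerivAt_comp_smul {f : Pt 2 → ℝ} (hf : ContDiff ℝ ∞ f) (x : Pt 2) (t : ℝ) :
    HasDerivAt (fun s : ℝ => f (s • x)) (fderiv ℝ f (t • x) x) t := by
  have h1 : HasDerivAt (fun s : ℝ => s • x) x t := by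
    simpa using (hasDerivAt_id t).smul_const x
  exact ((hf.differentiable (by simp)).differentiableAt.hasFDerivAt).comp_hasDerivAt t h1

theorem taylor2 {ψ : Pt 2 → ℝ} (hψ : ContDiff ℝ ∞ ψ) (x : Pt 2) :
    ψ x = ψ 0 + pderivFun 0 ψ 0 * x 0 + pderivFun 1 ψ 0 * x 1
      + ((x 1 * x 1) * Fop cw (pderivFun 1 (pderivFun 1 ψ)) x
        + (x 1 * x 0) * Fop cw (pderivFun 0 (pderivFun 1 ψ)) x
        + (x 0 * x 1) * Fop cw (pderivFun 1 (pderivFun 0 ψ)) x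
        + (x 0 * x 0) * Fop cw (pderivFun 0 (pderivFun 0 ψ)) x) := by
  set p0 : Pt 2 → ℝ := pderivFun 0 ψ with hp0
  set p1 : Pt 2 → ℝ := pderivFun 1 ψ with hp1
  have hp0s : ContDiff ℝ ∞ p0 := pderiv_smooth hψ 0
  have hp1s : ContDiff ℝ ∞ p1 := pderiv_smooth hψ 1
  set v : Pt 2 → ℝ := fun y => x 0 * p0 y + x 1 * p1 y with hv
  have hvs : ContDiff ℝ ∞ v := (contDiff_const.mul hp0s).add (contDiff_const.mul hp1s)
  have hveq : ∀ y, fderiv ℝ ψ y x = v y := fun y => clm_decomp (fderiv ℝ ψ y) x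
  set w : ℝ → ℝ := fun t =>
    x 0 * (x 0 * pderivFun 0 p0 (t • x) + x 1 * pderivFun 1 p0 (t • x))
      + x 1 * (x 0 * pderivFun 0 p1 (t • x) + x 1 * pderivFun 1 p1 (t • x)) with hw
  have hwv : ∀ t, fderiv ℝ v (t • x) x = w t := by
    intro t
    have hd0 : DifferentiableAt ℝ p0 (t • x) := (hp0s.differentiable (by simp)).differentiableAt
    have hd1 : DifferentiableAt ℝ p1 (t • x) := (hp1s.differentiable (by simp)).differentiableAt
    have hfv : fderiv ℝ v (t • x) =
        x 0 • fderiv ℝ p0 (t • x) + x 1 • fderiv ℝ p1 (t • x) := by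
      rw [hv]
      rw [fderiv_fun_add ((hd0.const_mul _)) ((hd1.const_mul _)), fderiv_const_mul hd0,
        fderiv_const_mul hd1]
    rw [hfv]
    simp only [ContinuousLinearMap.add_apply, ContinuousLinearMap.smul_apply, smul_eq_mul]
    rw [clm_decomp (fderiv ℝ p0 (t • x)) x, clm_decomp (fderiv ℝ p1 (t • x)) x]
    rfl
  have hG : ∀ t, HasDerivAt (fun s => ψ (s • x) + (1 - s) * v (s • x)) ((1 - t) * w t) t := by
    intro t
    have h1 : HasDerivAt (fun s : ℝ => ψ (s • x)) (v (t • x)) t := by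
      have := hasDerivAt_comp_smul hψ x t
      rwa [hveq] at this
    have h2 : HasDerivAt (fun s : ℝ => v (s • x)) (w t) t := by
      have := hasDerivAt_comp_smul hvs x t
      rwa [hwv] at this
    have h3 : HasDerivAt (fun s : ℝ => 1 - s) (-1) t := by
      simpa using (hasDerivAt_id' t).const_sub (1:ℝ)
    have h5 := h1.add (h3.mul h2)
    exact h5.congr_deriv (by ring)
  have hcomp : Continuous fun t : ℝ => t • x := continuous_id.smul continuous_const
  have hc00 : Continuous fun t : ℝ => pderivFun 0 p0 (t • x) :=
    (pderiv_smooth hp0s 0).continuous.comp hcomp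
  have hc10 : Continuous fun t : ℝ => pderivFun 1 p0 (t • x) :=
    (pderiv_smooth hp0s 1).continuous.comp hcomp
  have hc01 : Continuous fun t : ℝ => pderivFun 0 p1 (t • x) :=
    (pderiv_smooth hp1s 0).continuous.comp hcomp
  have hc11 : Continuous fun t : ℝ => pderivFun 1 p1 (t • x) :=
    (pderiv_smooth hp1s 1).continuous.comp hcomp
  have hwc : Continuous w := by
    rw [hw]
    exact (continuous_const.mul ((continuous_const.mul hc00).add
      (continuous_const.mul hc10))).add (continuous_const.mul ((continuous_const.mul hc01).add
      (continuous_const.mul hc11)))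
  have hFTC := intervalIntegral.integral_eq_sub_of_hasDerivAt
    (f := fun s => ψ (s • x) + (1 - s) * v (s • x)) (f' := fun t => (1 - t) * w t)
    (fun t _ => hG t) (((continuous_const.sub continuous_id).mul hwc).intervalIntegrable 0 1)
  have hRHS : (ψ ((1:ℝ) • x) + (1 - 1) * v ((1:ℝ) • x))
      - (ψ ((0:ℝ) • x) + (1 - 0) * v ((0:ℝ) • x)) = ψ x - ψ 0 - v 0 := by
    rw [one_smul, zero_smul]
    ring
  rw [hRHS] at hFTC
  -- split the integral into the four Fop pieces
  have hintg : ∀ (g : Pt 2 → ℝ), ContDiff ℝ ∞ g →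
      IntervalIntegrable (fun t : ℝ => cw t • g (t • x)) volume 0 1 := fun g hg =>
    (cont_integrand cw_cont hg.continuous x).intervalIntegrable 0 1
  have hi00 := hintg _ (pderiv_smooth hp0s 0)
  have hi10 := hintg _ (pderiv_smooth hp0s 1)
  have hi01 := hintg _ (pderiv_smooth hp1s 0)
  have hi11 := hintg _ (pderiv_smooth hp1s 1)
  have hfeq : (fun t : ℝ => (1 - t) * w t) = fun t : ℝ =>
      (x 0 * x 0) * (cw t • pderivFun 0 p0 (t • x))
        + ((x 0 * x 1) * (cw t • pderivFun 1 p0 (t • x))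
        + ((x 1 * x 0) * (cw t • pderivFun 0 p1 (t • x))
        + ((x 1 * x 1) * (cw t • pderivFun 1 p1 (t • x))))) := by
    funext t
    simp only [cw, smul_eq_mul, hw]
    ring
  have hsplit : (∫ t in (0:ℝ)..1, (1 - t) * w t)
      = (x 0 * x 0) * Fop cw (pderivFun 0 p0) x
        + ((x 0 * x 1) * Fop cw (pderivFun 1 p0) x
        + ((x 1 * x 0) * Fop cw (pderivFun 0 p1) x
        + ((x 1 * x 1) * Fop cw (pderivFun 1 p1) x))) := by
    rw [hfeq]
    rw [intervalIntegral.integral_add (hi00.const_mul _)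
        ((hi10.const_mul _).add ((hi01.const_mul _).add (hi11.const_mul _))),
      intervalIntegral.integral_add (hi10.const_mul _)
        ((hi01.const_mul _).add (hi11.const_mul _)),
      intervalIntegral.integral_add (hi01.const_mul _) (hi11.const_mul _),
      intervalIntegral.integral_const_mul, intervalIntegral.integral_const_mul,
      intervalIntegral.integral_const_mul, intervalIntegral.integral_const_mul]
    rfl
  rw [hsplit] at hFTC
  have hv0 : v 0 = x 0 * p0 0 + x 1 * p1 0 := rfl
  rw [hv0] at hFTC
  linarith [hFTC]
section Final
variable {Ω : Set (Pt 2)} (η : ContDiffBump (0 : Pt 2))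
  (hη : closedBall (0 : Pt 2) η.rOut ⊆ Ω)

include hη in
theorem Edist_symm (N : Dist 2 Ω) (i j : Fin 2) :
    Edist η hη N i j = Edist η hη N j i := by
  apply Dist.ext'
  apply LinearMap.ext
  intro φ
  have hL : LTest η hη i j φ = LTest η hη j i φ := by
    apply Subtype.ext
    funext x
    show qmul η i j x * _ = qmul η j i x * _
    simp only [qmul]
    ring
  show sgn i j * N.toLin (LTest η hη i j φ) = sgn j i * N.toLin (LTest η hη j i φ)
  rw [hL]
  congr 1
  simp [sgn, eq_comm]

include hη in
theorem w_isTest (a b : ℕ) : IsTestFun Ω (fun x => η x * polyA a b x) := by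
  have hsm : ContDiff ℝ ∞ (fun x => η x * polyA a b x) := by
    refine η.contDiff.mul ?_
    exact ((contDiff_const.mul ((contDiff_coord 0).pow a)).mul
      ((contDiff_coord 1).pow b)).div_const _
  have hsup : Function.support (fun x => η x * polyA a b x) ⊆
      closedBall (0 : Pt 2) η.rOut := by
    intro x hx
    have hne : (η : Pt 2 → ℝ) x ≠ 0 := by
      simp only [Function.mem_support] at hx
      exact fun h => hx (by rw [h, zero_mul])
    have h2 : Function.support (η : Pt 2 → ℝ) ⊆ closedBall (0 : Pt 2) η.rOut := by
      rw [← η.tsupport_eq]; exact subset_closure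
    exact h2 hne
  refine ⟨hsm, ?_, (closure_minimal hsup isClosed_closedBall).trans hη⟩
  exact HasCompactSupport.of_support_subset_isCompact (isCompact_closedBall _ _) hsup

include hη in
theorem Edist_cc (N : Dist 2 Ω) (hsupp : SuppIn N {0})
    (hlow : ∀ a b : ℕ, a + b < 2 →
      ∀ w : TestFun 2 Ω, (w : Pt 2 → ℝ) =ᶠ[𝓝 (0 : Pt 2)] polyA a b → N.toLin w = 0) :
    CurlCurlEq (fun i j => Edist η hη N i j) N := by
  intro ψ
  set T00 := LTest η hη 0 0 (pdT 1 (pdT 1 ψ)) with hT00def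
  set T01 := LTest η hη 0 1 (pdT 0 (pdT 1 ψ)) with hT01def
  set T10 := LTest η hη 1 0 (pdT 1 (pdT 0 ψ)) with hT10def
  set T11 := LTest η hη 1 1 (pdT 0 (pdT 0 ψ)) with hT11def
  have hcc : ccEval (fun i j => Edist η hη N i j) ψ
      = N.toLin (T00 + T01 + T10 + T11) := by
    show sgn 0 0 * N.toLin T00 - sgn 0 1 * N.toLin T01
        - sgn 1 0 * N.toLin T10 + sgn 1 1 * N.toLin T11 = _
    rw [map_add, map_add, map_add]
    have h1 : sgn (0:Fin 2) 0 = 1 := rfl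
    have h2 : sgn (0:Fin 2) 1 = -1 := rfl
    have h3 : sgn (1:Fin 2) 0 = -1 := rfl
    have h4 : sgn (1:Fin 2) 1 = 1 := rfl
    rw [h1, h2, h3, h4]
    ring
  set a0 : ℝ := (ψ : Pt 2 → ℝ) 0 with ha0
  set a1 : ℝ := pderivFun 0 (ψ : Pt 2 → ℝ) 0 with ha1
  set a2 : ℝ := pderivFun 1 (ψ : Pt 2 → ℝ) 0 with ha2
  set w00 : TestFun 2 Ω := ⟨fun x => η x * polyA 0 0 x, w_isTest η hη 0 0⟩ with hw00
  set w10 : TestFun 2 Ω := ⟨fun x => η x * polyA 1 0 x, w_isTest η hη 1 0⟩ with hw10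
  set w01 : TestFun 2 Ω := ⟨fun x => η x * polyA 0 1 x, w_isTest η hη 0 1⟩ with hw01
  set r : TestFun 2 Ω := ψ - (T00 + T01 + T10 + T11)
    - (a0 • w00 + (-a1) • w10 + (-a2) • w01) with hrdef
  -- r vanishes near the origin
  have hr0 : ∀ x ∈ ball (0 : Pt 2) η.rIn, (r : Pt 2 → ℝ) x = 0 := by
    intro x hx
    have hη1 : (η : Pt 2 → ℝ) x = 1 := η.one_of_mem_closedBall (ball_subset_closedBall hx)
    have hrx : (r : Pt 2 → ℝ) x = (ψ : Pt 2 → ℝ) x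
        - ((T00 : Pt 2 → ℝ) x + (T01 : Pt 2 → ℝ) x + (T10 : Pt 2 → ℝ) x + (T11 : Pt 2 → ℝ) x)
        - (a0 * ((w00 : Pt 2 → ℝ) x) + (-a1) * ((w10 : Pt 2 → ℝ) x)
          + (-a2) * ((w01 : Pt 2 → ℝ) x)) := by
      rw [hrdef]
      push_cast
      simp [smul_eq_mul]
    have hT00x : (T00 : Pt 2 → ℝ) x
        = η x * (x 1 * x 1) * Fop cw (pderivFun 1 (pderivFun 1 (ψ : Pt 2 → ℝ))) x := rfl
    have hT01x : (T01 : Pt 2 → ℝ) x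
        = η x * (x 1 * x 0) * Fop cw (pderivFun 0 (pderivFun 1 (ψ : Pt 2 → ℝ))) x := rfl
    have hT10x : (T10 : Pt 2 → ℝ) x
        = η x * (x 0 * x 1) * Fop cw (pderivFun 1 (pderivFun 0 (ψ : Pt 2 → ℝ))) x := rfl
    have hT11x : (T11 : Pt 2 → ℝ) x
        = η x * (x 0 * x 0) * Fop cw (pderivFun 0 (pderivFun 0 (ψ : Pt 2 → ℝ))) x := rfl
    have hw00x : (w00 : Pt 2 → ℝ) x = η x * polyA 0 0 x := rfl
    have hw10x : (w10 : Pt 2 → ℝ) x = η x * polyA 1 0 x := rfl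
    have hw01x : (w01 : Pt 2 → ℝ) x = η x * polyA 0 1 x := rfl
    have hpa00 : polyA 0 0 x = 1 := by simp [polyA]
    have hpa10 : polyA 1 0 x = -(x 0) := by simp [polyA]
    have hpa01 : polyA 0 1 x = -(x 1) := by simp [polyA]
    rw [hrx, hT00x, hT01x, hT10x, hT11x, hw00x, hw10x, hw01x, hpa00, hpa10, hpa01, hη1]
    have htay := taylor2 ψ.isTF.1 x
    rw [← ha0, ← ha1, ← ha2] at htay
    linarith [htay]
  -- N kills r
  have hNr : N.toLin r = 0 := by
    apply hsupp
    rw [eq_empty_iff_forall_notMem]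
    rintro y ⟨hy1, hy2⟩
    rw [mem_singleton_iff] at hy2
    subst hy2
    have hsub : Function.support (r : Pt 2 → ℝ) ⊆ (ball (0:Pt 2) η.rIn)ᶜ := by
      intro x hx hmem
      exact hx (hr0 x hmem)
    have h2 : tsupport (r : Pt 2 → ℝ) ⊆ (ball (0:Pt 2) η.rIn)ᶜ :=
      closure_minimal hsub isOpen_ball.isClosed_compl
    exact (h2 hy1) (mem_ball_self η.rIn_pos)
  -- N kills the w's
  have hNw : ∀ (a b : ℕ), a + b < 2 →
      ∀ (w : TestFun 2 Ω), (w : Pt 2 → ℝ) = (fun x => η x * polyA a b x) → N.toLin w = 0 := by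
    intro a b hab w hw
    apply hlow a b hab
    refine eventuallyEq_of_mem (ball_mem_nhds (0:Pt 2) η.rIn_pos) ?_
    intro x hx
    rw [hw]
    show η x * polyA a b x = polyA a b x
    rw [η.one_of_mem_closedBall (ball_subset_closedBall hx), one_mul]
  have hN00 : N.toLin w00 = 0 := hNw 0 0 (by norm_num) w00 rfl
  have hN10 : N.toLin w10 = 0 := hNw 1 0 (by norm_num) w10 rfl
  have hN01 : N.toLin w01 = 0 := hNw 0 1 (by norm_num) w01 rfl
  -- reassemble
  have hψeq : (T00 + T01 + T10 + T11) + (a0 • w00 + (-a1) • w10 + (-a2) • w01) + r = ψ := by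
    rw [hrdef]
    abel
  have := congrArg N.toLin hψeq
  simp only [map_add, LinearMap.map_smul, smul_eq_mul] at this
  rw [hNr, hN00, hN10, hN01] at this
  rw [hcc]
  simp only [map_add]
  linarith [this]
end Final

/-- A point-supported incompatibility field `N ∈ E(Ω)` of finite
degree of divergence whose coefficients `N^α` vanish for `|α| < 2` (equivalently,
`N(w^α) = 0` for all test functions `w^α` matching the monomials of order `< 2` near
the origin) is the incompatibility `Curl Curl E` of a point-supported symmetric strain
field `E ∈ E(Ω,Sym)`. -/
theorem statement_16 (Ω : Set (Pt 2)) (hopen : IsOpen Ω) (hbdd : Bornology.IsBounded Ω)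
    (hconn : IsConnected Ω) (h0 : (0 : Pt 2) ∈ Ω)
    (N : Dist 2 Ω) (hsupp : SuppIn N {0}) (hfin : EReal.IsFinite (degDiv N))
    (hlow : ∀ a b : ℕ, a + b < 2 →
      ∀ w : TestFun 2 Ω, (w : Pt 2 → ℝ) =ᶠ[𝓝 (0 : Pt 2)] polyA a b → N.toLin w = 0) :
    ∃ E : Fin 2 → Fin 2 → Dist 2 Ω,
      (∀ i j, E i j = E j i) ∧ (∀ i j, SuppIn (E i j) {0}) ∧ CurlCurlEq E N := by
  obtain ⟨δ, hδpos, hδ⟩ := Metric.isOpen_iff.mp hopen 0 h0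
  set η : ContDiffBump (0 : Pt 2) := ⟨δ/3, δ/2, by positivity, by linarith⟩ with hηdef
  have hη : closedBall (0:Pt 2) η.rOut ⊆ Ω := by
    refine (closedBall_subset_ball ?_).trans hδ
    show δ/2 < δ
    linarith
  exact ⟨fun i j => Edist η hη N i j, fun i j => Edist_symm η hη N i j,
    fun i j => Edist_suppIn η hη N hsupp i j, Edist_cc η hη N hsupp hlow⟩

end Paper
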